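/- Let n ≥ 2 be an integer, let 0 < α ≤ 2, and let 0 < d ≤ D be real numbers. Then (4π²/D² + (n−1)π²/d²)^{α/2} − (π²/D² + (n−1)π²/d²)^{α/2} ≥ (α π^α / (n+2)^{1−α/2}) · d^{2−α}/D². -/
import Mathlib


open Real

lemma bernoulli_mvt {A B p : ℝ} (hA : 0 < A) (hAB : A ≤ B) (hp0 : 0 ≤ p) (hp1 : p ≤ 1) :
    p * B ^ (p - 1) * (B - A) ≤ B ^ p - A ^ p := by
  have hB : 0 < B := hA.trans_le hAB
  have hBp : (0:ℝ) < B ^ p := Real.rpow_pos_of_pos hB p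
  have hs : (-1:ℝ) ≤ A / B - 1 := by
    have : 0 ≤ A / B := by positivity
    linarith
  have key : (A / B) ^ p ≤ 1 + p * (A / B - 1) := by
    have := rpow_one_add_le_one_add_mul_self hs hp0 hp1
    simpa using this
  have hApow : A ^ p = (A / B) ^ p * B ^ p := by
    rw [← Real.mul_rpow (by positivity) hB.le, div_mul_cancel₀ _ hB.ne']
  have hBp1 : B ^ (p - 1) = B ^ p / B := by
    rw [Real.rpow_sub hB, Real.rpow_one]
  have hm : (A / B) ^ p * B ^ p ≤ (1 + p * (A / B - 1)) * B ^ p :=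
    mul_le_mul_of_nonneg_right key hBp.le
  have heq : (1 + p * (A / B - 1)) * B ^ p = B ^ p - p * (B ^ p / B) * (B - A) := by
    field_simp
    ring
  rw [hBp1, hApow]
  linarith [heq ▸ hm]

theorem gap_mean_value_step (n : ℕ) (hn : 2 ≤ n) (α d D : ℝ)
    (hα : 0 < α) (hα2 : α ≤ 2) (hd : 0 < d) (hdD : d ≤ D) :
    (4 * π ^ 2 / D ^ 2 + (n - 1) * π ^ 2 / d ^ 2) ^ (α / 2)
        - (π ^ 2 / D ^ 2 + (n - 1) * π ^ 2 / d ^ 2) ^ (α / 2)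
      ≥ α * π ^ α / ((n : ℝ) + 2) ^ (1 - α / 2) * (d ^ (2 - α) / D ^ 2) := by
  have hπ := pi_pos
  have hD : 0 < D := hd.trans_le hdD
  have hn1 : (1:ℝ) ≤ (n:ℝ) - 1 := by
    have : (2:ℝ) ≤ (n:ℝ) := by exact_mod_cast hn
    linarith
  set p := α / 2 with hp
  have hp0 : 0 ≤ p := by positivity
  have hp1 : p ≤ 1 := by rw [hp]; linarith
  set A := π ^ 2 / D ^ 2 + ((n:ℝ) - 1) * π ^ 2 / d ^ 2 with hAdef
  set B := 4 * π ^ 2 / D ^ 2 + ((n:ℝ) - 1) * π ^ 2 / d ^ 2 with hBdef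
  have hterm : 0 ≤ ((n:ℝ) - 1) * π ^ 2 / d ^ 2 := by
    apply div_nonneg (mul_nonneg (by linarith) (by positivity)) (by positivity)
  have hApos : 0 < A := by
    have : 0 < π ^ 2 / D ^ 2 := by positivity
    rw [hAdef]; linarith
  have hAB : A ≤ B := by
    have h0 : 0 ≤ π ^ 2 / D ^ 2 := by positivity
    have e : 4 * π ^ 2 / D ^ 2 = π ^ 2 / D ^ 2 + 3 * (π ^ 2 / D ^ 2) := by ring
    rw [hAdef, hBdef, e]; linarith
  have hBpos : 0 < B := hApos.trans_le hAB
  have hBA : B - A = 3 * π ^ 2 / D ^ 2 := by rw [hAdef, hBdef]; ring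
  -- mean value / Bernoulli step
  have h1 : p * B ^ (p - 1) * (3 * π ^ 2 / D ^ 2) ≤ B ^ p - A ^ p := by
    have := bernoulli_mvt hApos hAB hp0 hp1
    rwa [hBA] at this
  -- bound B above by C = (n+3) π² / d²
  set C := ((n:ℝ) + 3) * π ^ 2 / d ^ 2 with hCdef
  have hBC : B ≤ C := by
    have h4 : 4 * π ^ 2 / D ^ 2 ≤ 4 * π ^ 2 / d ^ 2 := by
      gcongr
    have : 4 * π ^ 2 / d ^ 2 + ((n:ℝ) - 1) * π ^ 2 / d ^ 2 = C := by rw [hCdef]; ring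
    rw [hBdef]; linarith
  have hCpos : 0 < C := hBpos.trans_le hBC
  have h2 : C ^ (p - 1) ≤ B ^ (p - 1) :=
    Real.rpow_le_rpow_of_nonpos hBpos hBC (by linarith)
  -- compute C ^ (p-1)
  have hd2 : (0:ℝ) < d ^ 2 := by positivity
  have hn3 : (0:ℝ) < (n:ℝ) + 3 := by linarith
  have hCeq : C ^ (p - 1) = ((n:ℝ) + 3) ^ (p - 1) * π ^ (α - 2) * d ^ (2 - α) := by
    have hπ2 : (π ^ 2 : ℝ) ^ (p - 1) = π ^ (α - 2) := by
      rw [← Real.rpow_natCast π 2, ← Real.rpow_mul hπ.le]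
      congr 1
      rw [hp]; push_cast; ring
    have hd2e : (d ^ 2 : ℝ) ^ (p - 1) = d ^ (α - 2) := by
      rw [← Real.rpow_natCast d 2, ← Real.rpow_mul hd.le]
      congr 1
      rw [hp]; push_cast; ring
    have hdinv : (d ^ (α - 2))⁻¹ = d ^ (2 - α) := by
      rw [← Real.rpow_neg hd.le]; congr 1; ring
    rw [hCdef, Real.div_rpow (by positivity) hd2.le,
      Real.mul_rpow hn3.le (by positivity), hπ2, hd2e, div_eq_mul_inv, hdinv]
  -- the combinatorial factor: (n+2)^(p-1) ≤ (3/2) (n+3)^(p-1)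
  have hn2 : (0:ℝ) < (n:ℝ) + 2 := by linarith
  have hfactor : ((n:ℝ) + 2) ^ (p - 1) ≤ 3 / 2 * ((n:ℝ) + 3) ^ (p - 1) := by
    have hr1 : (1:ℝ) ≤ ((n:ℝ) + 3) / ((n:ℝ) + 2) := by
      rw [le_div_iff₀ hn2]; linarith
    have hr2 : ((n:ℝ) + 3) / ((n:ℝ) + 2) ≤ 3 / 2 := by
      rw [div_le_div_iff₀ hn2 (by norm_num)]
      have : (2:ℝ) ≤ (n:ℝ) := by exact_mod_cast hn
      linarith
    have hkey : (((n:ℝ) + 3) / ((n:ℝ) + 2)) ^ (1 - p) ≤ 3 / 2 := by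
      calc (((n:ℝ) + 3) / ((n:ℝ) + 2)) ^ (1 - p)
          ≤ (((n:ℝ) + 3) / ((n:ℝ) + 2)) ^ (1:ℝ) :=
            Real.rpow_le_rpow_of_exponent_le hr1 (by linarith)
        _ = ((n:ℝ) + 3) / ((n:ℝ) + 2) := Real.rpow_one _
        _ ≤ 3 / 2 := hr2
    have hsplit : (((n:ℝ) + 3) / ((n:ℝ) + 2)) ^ (1 - p)
        = ((n:ℝ) + 3) ^ (1 - p) * ((n:ℝ) + 2) ^ (p - 1) := by
      rw [Real.div_rpow hn3.le hn2.le, div_eq_mul_inv, ← Real.rpow_neg hn2.le]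
      congr 1; ring
    have h3p : (0:ℝ) < ((n:ℝ) + 3) ^ (1 - p) := Real.rpow_pos_of_pos hn3 _
    have h3p' : ((n:ℝ) + 3) ^ (1 - p) * ((n:ℝ) + 3) ^ (p - 1) = 1 := by
      rw [← Real.rpow_add hn3]; norm_num
    rw [hsplit] at hkey
    calc ((n:ℝ) + 2) ^ (p - 1)
        = (((n:ℝ) + 3) ^ (1 - p) * ((n:ℝ) + 2) ^ (p - 1)) * ((n:ℝ) + 3) ^ (p - 1) := by
          rw [mul_right_comm, h3p', one_mul]
      _ ≤ 3 / 2 * ((n:ℝ) + 3) ^ (p - 1) := by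
          apply mul_le_mul_of_nonneg_right hkey (Real.rpow_pos_of_pos hn3 _).le
  -- assemble
  have hππ : π ^ (α - 2) * π ^ 2 = π ^ α := by
    rw [← Real.rpow_natCast π 2, ← Real.rpow_add hπ]; norm_num
  have hdpos : (0:ℝ) < d ^ (2 - α) := Real.rpow_pos_of_pos hd _
  have hn2inv : (((n:ℝ) + 2) ^ (1 - p))⁻¹ = ((n:ℝ) + 2) ^ (p - 1) := by
    rw [← Real.rpow_neg hn2.le]; congr 1; ring
  have hRHS : α * π ^ α / ((n:ℝ) + 2) ^ (1 - p) * (d ^ (2 - α) / D ^ 2)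
      = α * π ^ α * ((n:ℝ) + 2) ^ (p - 1) * d ^ (2 - α) / D ^ 2 := by
    rw [div_eq_mul_inv (α * π ^ α), hn2inv]; ring
  rw [ge_iff_le, hRHS]
  have hchain : α * π ^ α * ((n:ℝ) + 2) ^ (p - 1) * d ^ (2 - α) / D ^ 2
      ≤ p * C ^ (p - 1) * (3 * π ^ 2 / D ^ 2) := by
    rw [hCeq]
    have hstep : α * π ^ α * ((n:ℝ) + 2) ^ (p - 1) * d ^ (2 - α)
        ≤ α * π ^ α * (3 / 2 * ((n:ℝ) + 3) ^ (p - 1)) * d ^ (2 - α) := by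
      apply mul_le_mul_of_nonneg_right _ hdpos.le
      apply mul_le_mul_of_nonneg_left hfactor (by positivity)
    have heq2 : p * (((n:ℝ) + 3) ^ (p - 1) * π ^ (α - 2) * d ^ (2 - α)) * (3 * π ^ 2 / D ^ 2)
        = α * π ^ α * (3 / 2 * ((n:ℝ) + 3) ^ (p - 1)) * d ^ (2 - α) / D ^ 2 := by
      rw [← hππ, hp]; ring
    rw [heq2]
    exact div_le_div_of_nonneg_right hstep (by positivity) |>.trans_eq rfl
  have hmid : p * C ^ (p - 1) * (3 * π ^ 2 / D ^ 2)
      ≤ p * B ^ (p - 1) * (3 * π ^ 2 / D ^ 2) := by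
    apply mul_le_mul_of_nonneg_right _ (by positivity)
    exact mul_le_mul_of_nonneg_left h2 hp0
  linarith
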